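/- arXiv:2402.10557 — 2 statements merged into one kernel-verified Lean document; each statement's English description precedes it below -/
import Mathlib

section
/- Let M₁, M₂ be complex matrices of sizes n₁×n₁ and n₂×n₂, E₁, E₂ matrices of sizes n₁×m and n₂×m, and ρ₁₂, ρ₂₁ ∈ ℂ. If λ ∈ ℂ is such that λ·I − M₁ and λ·I − M₂ are invertible, then det of the block matrix [[λI−M₁, −ρ₁₂ E₁E₂ᵀ], [−ρ₂₁ E₂E₁ᵀ, λI−M₂]] equals det(λI−M₁)·det(λI−M₂)·det(I_m − ρ₁₂ρ₂₁ Γ₁ Γ₂), where Γ_i = E_iᵀ (λI − M_i)⁻¹ E_i. -/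
open Matrix

theorem stmt7 (n₁ n₂ m : ℕ)
    (M₁ : Matrix (Fin n₁) (Fin n₁) ℂ) (M₂ : Matrix (Fin n₂) (Fin n₂) ℂ)
    (E₁ : Matrix (Fin n₁) (Fin m) ℂ) (E₂ : Matrix (Fin n₂) (Fin m) ℂ)
    (ρ₁₂ ρ₂₁ : ℂ) (lam : ℂ)
    (h₁ : IsUnit (lam • (1 : Matrix (Fin n₁) (Fin n₁) ℂ) - M₁).det)
    (h₂ : IsUnit (lam • (1 : Matrix (Fin n₂) (Fin n₂) ℂ) - M₂).det) :
    (Matrix.fromBlocks (lam • 1 - M₁) (-(ρ₁₂ • (E₁ * E₂ᵀ)))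
        (-(ρ₂₁ • (E₂ * E₁ᵀ))) (lam • 1 - M₂)).det =
      (lam • (1 : Matrix (Fin n₁) (Fin n₁) ℂ) - M₁).det *
        (lam • (1 : Matrix (Fin n₂) (Fin n₂) ℂ) - M₂).det *
        (1 - (ρ₁₂ * ρ₂₁) •
            ((E₁ᵀ * (lam • 1 - M₁)⁻¹ * E₁) * (E₂ᵀ * (lam • 1 - M₂)⁻¹ * E₂))).det := by
  set A := lam • (1 : Matrix (Fin n₁) (Fin n₁) ℂ) - M₁ with hA
  set D := lam • (1 : Matrix (Fin n₂) (Fin n₂) ℂ) - M₂ with hD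
  haveI : Invertible A := A.invertibleOfIsUnitDet h₁
  haveI : Invertible D := D.invertibleOfIsUnitDet h₂
  rw [Matrix.det_fromBlocks₁₁]
  simp only [Matrix.invOf_eq_nonsing_inv]
  have key : D - (-(ρ₂₁ • (E₂ * E₁ᵀ))) * A⁻¹ * (-(ρ₁₂ • (E₁ * E₂ᵀ)))
      = D * (1 - (D⁻¹ * E₂) * ((ρ₁₂ * ρ₂₁) • (E₁ᵀ * A⁻¹ * E₁ * E₂ᵀ))) := by
    rw [Matrix.mul_sub, Matrix.mul_one, ← Matrix.mul_assoc D,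
      Matrix.mul_inv_cancel_left_of_invertible]
    congr 1
    simp only [Matrix.neg_mul, Matrix.mul_neg, neg_neg, Matrix.smul_mul, Matrix.mul_smul,
      smul_smul, smul_neg, neg_neg, Matrix.mul_assoc]
  rw [key, det_mul, Matrix.det_one_sub_mul_comm, mul_assoc]
  congr 2
  simp only [Matrix.smul_mul, Matrix.mul_smul, Matrix.mul_assoc]
end

section
/- Let M₁, M₂ be real symmetric matrices of sizes n₁, n₂ and E₁, E₂ indexing matrices of sizes n₁×m, n₂×m. If λ is an eigenvalue of M₁ with multiplicity d (dimension of eigenspace) and every eigenvector of M₁ for λ is orthogonal to the columns of E₁ (λ is E₁-non-main), then λ is an eigenvalue of the symmetric block matrix B = [[M₁, E₁E₂ᵀ], [E₂E₁ᵀ, M₂]] with multiplicity at least d. -/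
open Matrix

theorem stmt18 (n₁ n₂ m d : ℕ)
    (M₁ : Matrix (Fin n₁) (Fin n₁) ℝ) (hM₁ : M₁.IsSymm)
    (M₂ : Matrix (Fin n₂) (Fin n₂) ℝ) (hM₂ : M₂.IsSymm)
    (E₁ : Matrix (Fin n₁) (Fin m) ℝ) (E₂ : Matrix (Fin n₂) (Fin m) ℝ)
    (lam : ℝ)
    (hd : Module.finrank ℝ
      (LinearMap.ker ((M₁ - lam • (1 : Matrix (Fin n₁) (Fin n₁) ℝ)).mulVecLin)) = d)
    (hdpos : 0 < d)
    (hnonmain : ∀ v : Fin n₁ → ℝ, M₁.mulVec v = lam • v → E₁ᵀ.mulVec v = 0) :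
    d ≤ Module.finrank ℝ
      (LinearMap.ker ((Matrix.fromBlocks M₁ (E₁ * E₂ᵀ) (E₂ * E₁ᵀ) M₂ -
        lam • (1 : Matrix (Fin n₁ ⊕ Fin n₂) (Fin n₁ ⊕ Fin n₂) ℝ)).mulVecLin)) := by
  subst hd
  set A := Matrix.fromBlocks M₁ (E₁ * E₂ᵀ) (E₂ * E₁ᵀ) M₂ -
      lam • (1 : Matrix (Fin n₁ ⊕ Fin n₂) (Fin n₁ ⊕ Fin n₂) ℝ) with hA
  have hmem : ∀ v ∈ LinearMap.ker ((M₁ - lam • (1 : Matrix (Fin n₁) (Fin n₁) ℝ)).mulVecLin),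
      Sum.elim v (0 : Fin n₂ → ℝ) ∈ LinearMap.ker A.mulVecLin := by
    intro v hv
    have hv' : (M₁ - lam • 1).mulVec v = 0 := hv
    have hMv : M₁.mulVec v = lam • v := by
      have := hv'
      rw [sub_mulVec, smul_mulVec, one_mulVec, sub_eq_zero] at this
      exact this
    have hE : E₁ᵀ.mulVec v = 0 := hnonmain v hMv
    have key : A.mulVec (Sum.elim v 0) = 0 := by
      rw [hA, sub_mulVec, smul_mulVec, one_mulVec, fromBlocks_mulVec]
      have h1 : (E₁ * E₂ᵀ).mulVec (0 : Fin n₂ → ℝ) = 0 := mulVec_zero _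
      have h2 : M₂.mulVec (0 : Fin n₂ → ℝ) = 0 := mulVec_zero _
      have h3 : (E₂ * E₁ᵀ).mulVec v = 0 := by
        rw [← mulVec_mulVec, hE, mulVec_zero]
      simp only [Sum.elim_comp_inl, Sum.elim_comp_inr] at *
      rw [h1, h2, h3, hMv]
      ext (i | j) <;> simp
    exact key
  let f : LinearMap.ker ((M₁ - lam • (1 : Matrix (Fin n₁) (Fin n₁) ℝ)).mulVecLin) →ₗ[ℝ]
      LinearMap.ker A.mulVecLin :=
    { toFun := fun v => ⟨Sum.elim (v : Fin n₁ → ℝ) 0, hmem v v.2⟩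
      map_add' := by
        intro v w
        apply Subtype.ext
        funext i
        cases i <;> simp [Sum.elim]
      map_smul' := by
        intro c v
        apply Subtype.ext
        funext i
        cases i <;> simp [Sum.elim] }
  have hf : Function.Injective f := by
    intro v w h
    have h' : Sum.elim (v : Fin n₁ → ℝ) 0 = Sum.elim (w : Fin n₁ → ℝ) 0 :=
      congrArg Subtype.val h
    ext i
    exact congrFun h' (Sum.inl i)
  exact LinearMap.finrank_le_finrank_of_injective hf
end
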